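/- Let L be a real n×n Laplacian matrix, D a diagonal matrix with entries d_i ∈ {0,1}, c > 0, and suppose λ ∈ ℂ is an eigenvalue of -(L + cD) with Re(λ) ≥ 0. Then λ = 0 and, moreover, for the Gershgorin row index q realizing the disc containing λ, any such q with d_q = 1 leads to a contradiction; in particular if all rows have d_i = 1 then -(L+cD) has no eigenvalue with nonnegative real part. -/

import Mathlib

/-- If `λ` is an eigenvalue of `-(L + cD)` with `Re λ ≥ 0`, where `L` is a Laplacian,
`D` a 0-1 diagonal matrix and `c > 0`, then `λ = 0`; moreover if every node is pinned
(`d i = 1` for all `i`) this is impossible. -/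
theorem pinned_laplacian_eigenvalue (n : ℕ) (L : Matrix (Fin n) (Fin n) ℝ)
    (d : Fin n → ℝ) (c : ℝ)
    (hoff : ∀ i j, i ≠ j → L i j ≤ 0)
    (hdiag : ∀ i, L i i = -∑ j ∈ Finset.univ.erase i, L i j)
    (hd : ∀ i, d i = 0 ∨ d i = 1) (hc : 0 < c)
    (lam : ℂ)
    (hlam : lam ∈ spectrum ℂ ((-(L + c • Matrix.diagonal d)).map Complex.ofReal))
    (hre : 0 ≤ lam.re) :
    lam = 0 ∧ ((∀ i, d i = 1) → False) := by
  set A := ((-(L + c • Matrix.diagonal d)).map Complex.ofReal) with hA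
  have heig : Module.End.HasEigenvalue (Matrix.toLin' A) lam := by
    rw [Module.End.hasEigenvalue_iff_mem_spectrum]
    rwa [show Matrix.toLin' A = Matrix.toLinAlgEquiv' A from rfl,
      AlgEquiv.spectrum_eq Matrix.toLinAlgEquiv' A]
  obtain ⟨k, hk⟩ := eigenvalue_mem_ball heig
  rw [Metric.mem_closedBall] at hk
  -- compute entries
  have hAkk : A k k = Complex.ofReal (-(L k k + c * d k)) := by
    simp [hA, Matrix.diagonal_apply_eq, Matrix.map_apply]
  have hradius : (∑ j ∈ Finset.univ.erase k, ‖A k j‖) = L k k := by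
    rw [hdiag k, ← Finset.sum_neg_distrib]
    refine Finset.sum_congr rfl fun j hj => ?_
    have hjk : k ≠ j := fun h => (Finset.mem_erase.mp hj).1 h.symm
    have hle : L k j ≤ 0 := hoff k j hjk
    have hD : Matrix.diagonal d k j = 0 := Matrix.diagonal_apply_ne d (fun h => hjk h)
    simp [hA, Matrix.map_apply, hD, Complex.norm_real, abs_of_nonpos hle]
  rw [hAkk, hradius, Complex.dist_eq] at hk
  -- key inequality on real parts
  have hLkk : 0 ≤ L k k := by
    have := hk
    calc 0 ≤ ‖lam - Complex.ofReal (-(L k k + c * d k))‖ := norm_nonneg _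
    _ ≤ L k k := hk
  have hrepart : (lam - Complex.ofReal (-(L k k + c * d k))).re ≤ L k k := by
    refine le_trans ?_ hk
    exact le_trans (le_abs_self _) (Complex.abs_re_le_norm _)
  have hre' : (lam - Complex.ofReal (-(L k k + c * d k))).re
      = lam.re + L k k + c * d k := by
    simp [Complex.sub_re, Complex.ofReal_re]; ring
  rw [hre'] at hrepart
  have hcd : 0 ≤ c * d k := by
    rcases hd k with h | h <;> simp [h, hc.le]
  have hre0 : lam.re = 0 ∧ c * d k = 0 := by
    constructor <;> nlinarith
  have hdk0 : d k = 0 := by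
    rcases hd k with h | h
    · exact h
    · exfalso; rw [h, mul_one] at hre0; exact hc.ne' hre0.2
  -- now show lam = 0
  have him : lam.im = 0 := by
    have hsq : ‖lam - Complex.ofReal (-(L k k + c * d k))‖ ^ 2 ≤ L k k ^ 2 := by
      have := norm_nonneg (lam - Complex.ofReal (-(L k k + c * d k)))
      nlinarith
    rw [Complex.sq_norm, Complex.normSq_apply, hre', Complex.sub_im, Complex.ofReal_im,
      hre0.1, hdk0] at hsq
    simp at hsq
    nlinarith
  have hlam0 : lam = 0 := Complex.ext hre0.1 him
  exact ⟨hlam0, fun hall => by have := hall k; rw [this] at hdk0; norm_num at hdk0⟩
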